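/- The reduced loop construction is functorial: a based digraph map f : (G,∗_G) → (H,∗_H) induces a well-defined based digraph map L̄f : L̄G → L̄H by ⟨γ⟩ ↦ ⟨f ∘ γ⟩, and this assignment satisfies L̄(g ∘ f) = L̄g ∘ L̄f and L̄(id_G) = id_{L̄G}. -/

import Mathlib

/-- A digraph map between adjacency relations: every arrow goes to an arrow or collapses. -/
def IsDigraphMap {V W : Type*} (A : V → V → Prop) (B : W → W → Prop) (f : V → W) : Prop :=
  ∀ v w, A v w → B (f v) (f w) ∨ f v = f w

/-- Adjacency of the line digraph `I_n` with direction function `d`: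
`d i = true` means arrow `i → i+1`, `d i = false` means arrow `i+1 → i`. -/
def lineAdj (n : ℕ) (d : ℕ → Bool) : ℕ → ℕ → Prop :=
  fun i j => (j = i + 1 ∧ i < n ∧ d i = true) ∨ (i = j + 1 ∧ j < n ∧ d j = false)

/-- Directions of the standard line digraph `J_n`: arrow `i → i+1` iff `i` is even. -/
def Jdir : ℕ → Bool := fun i => decide (Even i)

/-- A shrinking map `h : I_N → I_m`: a monotone digraph map with `h 0 = 0` and `h N = m`. -/
def IsShrinking (N m : ℕ) (dN dm : ℕ → Bool) (h : ℕ → ℕ) : Prop :=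
  IsDigraphMap (lineAdj N dN) (lineAdj m dm) h ∧ h 0 = 0 ∧ h N = m ∧
    ∀ i j, i ≤ j → j ≤ N → h i ≤ h j

/-- Adjacency of the box product `G □ H`. -/
def boxAdj {V W : Type*} (A : V → V → Prop) (B : W → W → Prop) :
    V × W → V × W → Prop :=
  fun p q => (p.1 = q.1 ∧ B p.2 q.2) ∨ (A p.1 q.1 ∧ p.2 = q.2)

/-- Adjacency of the cylinder `C_h` of a map `h : I_M → I_m` between line digraphs. -/
def cylAdjLine (M m : ℕ) (dM dm : ℕ → Bool) (h : ℕ → ℕ) :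
    ℕ ⊕ ℕ → ℕ ⊕ ℕ → Prop
  | Sum.inl i, Sum.inl j => lineAdj M dM i j
  | Sum.inr i, Sum.inr j => lineAdj m dm i j
  | Sum.inl i, Sum.inr j => i ≤ M ∧ h i = j
  | Sum.inr _, Sum.inl _ => False

/-- A based loop in `(G, x)` from a line digraph. -/
structure LoopN (V : Type*) (A : V → V → Prop) (x : V) where
  len : ℕ
  dir : ℕ → Bool
  toFun : ℕ → V
  ismap : IsDigraphMap (lineAdj len dir) A toFun
  base0 : toFun 0 = x
  base1 : toFun len = x

/-- `φ` is a subdivision of the loop `ψ`: `φ = ψ ∘ h` on its domain, `h` shrinking. -/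
def IsSubdivOfL {V : Type*} {A : V → V → Prop} {x : V} (φ ψ : LoopN V A x) : Prop :=
  ∃ h : ℕ → ℕ, IsShrinking φ.len ψ.len φ.dir ψ.dir h ∧
    ∀ i ≤ φ.len, φ.toFun i = ψ.toFun (h i)

/-- A minimal loop: no two consecutive values coincide. -/
def MinimalLoop {V : Type*} {A : V → V → Prop} {x : V} (φ : LoopN V A x) : Prop :=
  ∀ i < φ.len, φ.toFun i ≠ φ.toFun (i + 1)

/-- Subdivision equivalence of loops: both are subdivisions of a common minimal loop. -/
def SubdivRelL (V : Type*) (A : V → V → Prop) (x : V) (φ ψ : LoopN V A x) : Prop :=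
  ∃ ρ : LoopN V A x, MinimalLoop ρ ∧ IsSubdivOfL φ ρ ∧ IsSubdivOfL ψ ρ

/-- Vertices of the reduced loop digraph `L̄G`: subdivision classes of based loops. -/
def LbarV (V : Type*) (A : V → V → Prop) (x : V) := Quot (SubdivRelL V A x)

/-- Adjacency of the reduced loop digraph: `⟨f⟩ → ⟨g⟩` iff some representatives of the
classes, on the same line digraph, satisfy `f₁(v) → g₁(v)` or `f₁(v) = g₁(v)` for all
vertices `v`. -/
def LbarAdj (V : Type*) (A : V → V → Prop) (x : V) :
    LbarV V A x → LbarV V A x → Prop :=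
  fun a b => ∃ φ ψ : LoopN V A x,
    Quot.mk (SubdivRelL V A x) φ = a ∧ Quot.mk (SubdivRelL V A x) ψ = b ∧
    φ.len = ψ.len ∧ (∀ i < φ.len, φ.dir i = ψ.dir i) ∧
    ∀ i ≤ φ.len, A (φ.toFun i) (ψ.toFun i) ∨ φ.toFun i = ψ.toFun i

/-- The constant loop at the base-point. -/
def constLoopN (V : Type*) (A : V → V → Prop) (x : V) : LoopN V A x :=
  ⟨0, fun _ => true, fun _ => x,
    fun v w hvw => by
      rcases hvw with ⟨_, h, _⟩ | ⟨_, h, _⟩ <;> exact absurd h (Nat.not_lt_zero _),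
    rfl, rfl⟩

/-- Composition of digraph maps is a digraph map. -/
theorem isDigraphMap_comp {V W U : Type*} {A : V → V → Prop} {B : W → W → Prop}
    {C : U → U → Prop} {f : V → W} {g : W → U}
    (hf : IsDigraphMap A B f) (hg : IsDigraphMap B C g) :
    IsDigraphMap A C (g ∘ f) := by
  intro v w hvw
  rcases hf v w hvw with h | h
  · exact hg _ _ h
  · exact Or.inr (congrArg g h)

/-- Post-composition of a based loop with a based digraph map. -/
def compLoop {V W : Type*} {A : V → V → Prop} {B : W → W → Prop} {x : V} {y : W}
    (f : V → W) (hf : IsDigraphMap A B f) (hx : f x = y) (γ : LoopN V A x) :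
    LoopN W B y :=
  ⟨γ.len, γ.dir, f ∘ γ.toFun, isDigraphMap_comp γ.ismap hf,
    by rw [Function.comp_apply, γ.base0, hx],
    by rw [Function.comp_apply, γ.base1, hx]⟩

section Aux

variable {V : Type*} {A : V → V → Prop} {x : V}

lemma shrinking_id (n : ℕ) (d : ℕ → Bool) : IsShrinking n n d d id :=
  ⟨fun _ _ h => Or.inl h, rfl, rfl, fun _ _ hij _ => hij⟩

lemma subdiv_refl (φ : LoopN V A x) : IsSubdivOfL φ φ :=
  ⟨id, shrinking_id _ _, fun _ _ => rfl⟩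

lemma subdiv_trans {φ ψ ρ : LoopN V A x} (h1 : IsSubdivOfL φ ψ) (h2 : IsSubdivOfL ψ ρ) :
    IsSubdivOfL φ ρ := by
  obtain ⟨h, ⟨hm, h0, hN, hmono⟩, heq⟩ := h1
  obtain ⟨k, ⟨km, k0, kN, kmono⟩, keq⟩ := h2
  have hle : ∀ i, i ≤ φ.len → h i ≤ ψ.len := fun i hi => by
    rw [← hN]; exact hmono i φ.len hi le_rfl
  refine ⟨k ∘ h, ⟨isDigraphMap_comp hm km, ?_, ?_, ?_⟩, ?_⟩
  · simp [Function.comp, h0, k0]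
  · simp [Function.comp, hN, kN]
  · intro i j hij hj
    exact kmono _ _ (hmono i j hij hj) (hle j hj)
  · intro i hi
    rw [heq i hi, keq (h i) (hle i hi)]; rfl

lemma collapse_step (γ : LoopN V A x) (i : ℕ) (hi : i < γ.len)
    (he : γ.toFun i = γ.toFun (i + 1)) :
    ∃ γ' : LoopN V A x, γ'.len = γ.len - 1 ∧ IsSubdivOfL γ γ' := by
  set n := γ.len with hn
  set fn : ℕ → V := fun j => if j ≤ i then γ.toFun j else γ.toFun (j + 1) with hfn
  have key : ∀ j, i ≤ j → fn j = γ.toFun (j + 1) := by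
    intro j hj
    by_cases h : j ≤ i
    · have hji : j = i := le_antisymm h hj
      simp [hfn, h, hji, he]
    · simp [hfn, h]
  have keylt : ∀ j, j ≤ i → fn j = γ.toFun j := by
    intro j hj; simp [hfn, hj]
  set dr : ℕ → Bool := fun j => if j < i then γ.dir j else γ.dir (j + 1) with hdr
  have drlt : ∀ j, j < i → dr j = γ.dir j := fun j hj => by simp [hdr, hj]
  have drge : ∀ j, i ≤ j → dr j = γ.dir (j + 1) := fun j hj => by
    simp [hdr, Nat.not_lt.mpr hj]
  refine ⟨⟨n - 1, dr, fn, ?_, ?_, ?_⟩, rfl, ?_⟩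
  · -- digraph map
    intro v w hvw
    rcases hvw with ⟨hw, hv, hd⟩ | ⟨hv, hw, hd⟩
    · subst hw
      by_cases hvi : v < i
      · have hadj : lineAdj n γ.dir v (v + 1) :=
          Or.inl ⟨rfl, by omega, by rw [← drlt v hvi]; exact hd⟩
        have h2 := γ.ismap _ _ hadj
        rw [keylt v (by omega), keylt (v + 1) (by omega)]
        exact h2
      · have hadj : lineAdj n γ.dir (v + 1) (v + 1 + 1) :=
          Or.inl ⟨rfl, by omega, by rw [← drge v (by omega)]; exact hd⟩
        have h2 := γ.ismap _ _ hadj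
        rw [key v (by omega), key (v + 1) (by omega)]
        exact h2
    · subst hv
      by_cases hwi : w < i
      · have hadj : lineAdj n γ.dir (w + 1) w :=
          Or.inr ⟨rfl, by omega, by rw [← drlt w hwi]; exact hd⟩
        have h2 := γ.ismap _ _ hadj
        rw [keylt w (by omega), keylt (w + 1) (by omega)]
        exact h2
      · have hadj : lineAdj n γ.dir (w + 1 + 1) (w + 1) :=
          Or.inr ⟨rfl, by omega, by rw [← drge w (by omega)]; exact hd⟩
        have h2 := γ.ismap _ _ hadj
        rw [key w (by omega), key (w + 1) (by omega)]
        exact h2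
  · rw [keylt 0 (Nat.zero_le _)]; exact γ.base0
  · rw [key (n - 1) (by omega), show n - 1 + 1 = n by omega]; exact γ.base1
  · -- the shrinking
    set h : ℕ → ℕ := fun j => if j ≤ i then j else j - 1 with hh
    have hle : ∀ j, j ≤ i → h j = j := fun j hj => by simp [hh, hj]
    have hgt : ∀ j, i < j → h j = j - 1 := fun j hj => by
      simp [hh, Nat.not_le.mpr hj]
    refine ⟨h, ⟨?_, hle 0 (Nat.zero_le _), by rw [hgt n (by omega)], ?_⟩, ?_⟩
    · -- h is a digraph map
      dsimp only
      intro v w hvw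
      rcases hvw with ⟨hw, hv, hd⟩ | ⟨hv, hw, hd⟩
      · subst hw
        rcases lt_trichotomy v i with h1 | h1 | h1
        · left
          rw [hle v (by omega), hle (v + 1) (by omega)]
          exact Or.inl ⟨rfl, by omega, by rw [drlt v h1]; exact hd⟩
        · right
          rw [hle v (by omega), hgt (v + 1) (by omega)]
          omega
        · left
          rw [hgt v (by omega), hgt (v + 1) (by omega)]
          have hv1 : v - 1 + 1 = v := by omega
          refine Or.inl ⟨by omega, by omega, ?_⟩
          rw [drge (v - 1) (by omega), hv1]; exact hd
      · subst hv
        rcases lt_trichotomy w i with h1 | h1 | h1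
        · left
          rw [hle w (by omega), hle (w + 1) (by omega)]
          exact Or.inr ⟨rfl, by omega, by rw [drlt w h1]; exact hd⟩
        · right
          rw [hle w (by omega), hgt (w + 1) (by omega)]
          omega
        · left
          rw [hgt w (by omega), hgt (w + 1) (by omega)]
          have hw1 : w - 1 + 1 = w := by omega
          refine Or.inr ⟨by omega, by omega, ?_⟩
          rw [drge (w - 1) (by omega), hw1]; exact hd
    · -- monotone
      intro a b hab _
      by_cases ha : a ≤ i <;> by_cases hb : b ≤ i
      · rw [hle a ha, hle b hb]; exact hab
      · rw [hle a ha, hgt b (by omega)]; omega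
      · omega
      · rw [hgt a (by omega), hgt b (by omega)]; omega
    · -- values
      dsimp only
      intro j _
      by_cases hj : j ≤ i
      · rw [hle j hj, keylt j hj]
      · rw [hgt j (by omega), key (j - 1) (by omega), show j - 1 + 1 = j by omega]

lemma exists_minimal_aux (n : ℕ) :
    ∀ γ : LoopN V A x, γ.len = n → ∃ ρ : LoopN V A x, MinimalLoop ρ ∧ IsSubdivOfL γ ρ := by
  induction n using Nat.strong_induction_on with
  | _ n ih =>
    intro γ hn
    by_cases hmin : MinimalLoop γ
    · exact ⟨γ, hmin, subdiv_refl γ⟩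
    · rw [MinimalLoop] at hmin
      push_neg at hmin
      obtain ⟨i, hi, he⟩ := hmin
      obtain ⟨γ', hlen, hsub⟩ := collapse_step γ i hi he
      obtain ⟨ρ, hρ, hsub'⟩ := ih γ'.len (by omega) γ' rfl
      exact ⟨ρ, hρ, subdiv_trans hsub hsub'⟩

lemma exists_minimal (γ : LoopN V A x) :
    ∃ ρ : LoopN V A x, MinimalLoop ρ ∧ IsSubdivOfL γ ρ :=
  exists_minimal_aux γ.len γ rfl

lemma subdiv_comp {W : Type*} {B : W → W → Prop} {y : W} (f : V → W)
    (hf : IsDigraphMap A B f) (hx : f x = y) {φ ρ : LoopN V A x}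
    (h : IsSubdivOfL φ ρ) :
    IsSubdivOfL (compLoop f hf hx φ) (compLoop f hf hx ρ) := by
  obtain ⟨h', hs, heq⟩ := h
  exact ⟨h', hs, fun i hi => congrArg f (heq i hi)⟩

lemma comp_sound {W : Type*} {B : W → W → Prop} {y : W} (f : V → W)
    (hf : IsDigraphMap A B f) (hx : f x = y) {φ ψ : LoopN V A x}
    (hrel : SubdivRelL V A x φ ψ) :
    Quot.mk (SubdivRelL W B y) (compLoop f hf hx φ) =
      Quot.mk (SubdivRelL W B y) (compLoop f hf hx ψ) := by
  obtain ⟨ρ, _, h1, h2⟩ := hrel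
  obtain ⟨σ, hσmin, hσ⟩ := exists_minimal (compLoop f hf hx ρ)
  exact Quot.sound ⟨σ, hσmin, subdiv_trans (subdiv_comp f hf hx h1) hσ,
    subdiv_trans (subdiv_comp f hf hx h2) hσ⟩

end Aux

/-- Functoriality of the reduced loop digraph: a based digraph map `f : (G,∗) → (H,∗)`
induces a well-defined based digraph map `L̄f : L̄G → L̄H`, `⟨γ⟩ ↦ ⟨f ∘ γ⟩`, and this
assignment satisfies `L̄(g ∘ f) = L̄g ∘ L̄f` and `L̄(id) = id`. -/
theorem stmt19 {V W U : Type*} {A : V → V → Prop} {B : W → W → Prop}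
    {C : U → U → Prop} {x : V} {y : W} {z : U}
    (f : V → W) (g : W → U)
    (hf : IsDigraphMap A B f) (hg : IsDigraphMap B C g)
    (hx : f x = y) (hy : g y = z) :
    ∃ (Lf : LbarV V A x → LbarV W B y) (Lg : LbarV W B y → LbarV U C z)
      (Lgf : LbarV V A x → LbarV U C z),
      IsDigraphMap (LbarAdj V A x) (LbarAdj W B y) Lf ∧
      Lf (Quot.mk (SubdivRelL V A x) (constLoopN V A x)) =
        Quot.mk (SubdivRelL W B y) (constLoopN W B y) ∧
      (∀ γ, Lf (Quot.mk (SubdivRelL V A x) γ) =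
        Quot.mk (SubdivRelL W B y) (compLoop f hf hx γ)) ∧
      IsDigraphMap (LbarAdj W B y) (LbarAdj U C z) Lg ∧
      (∀ γ, Lg (Quot.mk (SubdivRelL W B y) γ) =
        Quot.mk (SubdivRelL U C z) (compLoop g hg hy γ)) ∧
      (∀ γ, Lgf (Quot.mk (SubdivRelL V A x) γ) =
        Quot.mk (SubdivRelL U C z)
          (compLoop (g ∘ f) (isDigraphMap_comp hf hg)
            (by rw [Function.comp_apply, hx]; exact hy) γ)) ∧
      Lgf = Lg ∘ Lf ∧
      ∀ Lid : LbarV V A x → LbarV V A x,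
        (∀ γ, Lid (Quot.mk (SubdivRelL V A x) γ) =
          Quot.mk (SubdivRelL V A x)
            (compLoop id (fun v w h => Or.inl h) rfl γ)) → Lid = id := by
  classical
  refine ⟨Quot.lift (fun γ => Quot.mk _ (compLoop f hf hx γ))
      (fun _ _ h => comp_sound f hf hx h),
    Quot.lift (fun γ => Quot.mk _ (compLoop g hg hy γ))
      (fun _ _ h => comp_sound g hg hy h),
    Quot.lift (fun γ => Quot.mk _ (compLoop (g ∘ f) (isDigraphMap_comp hf hg)
        (by rw [Function.comp_apply, hx]; exact hy) γ))
      (fun _ _ h => comp_sound _ _ _ h),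
    ?_, ?_, fun γ => rfl, ?_, fun γ => rfl, fun γ => rfl, ?_, ?_⟩
  · -- Lf is a digraph map
    intro a b hab
    obtain ⟨φ, ψ, ha, hb, hlen, hdir, hpt⟩ := hab
    subst ha; subst hb
    left
    refine ⟨compLoop f hf hx φ, compLoop f hf hx ψ, rfl, rfl, hlen, hdir, ?_⟩
    intro i hi
    rcases hpt i hi with h | h
    · rcases hf _ _ h with h' | h'
      · exact Or.inl h'
      · exact Or.inr h'
    · exact Or.inr (congrArg f h)
  · -- base point
    refine Quot.sound ⟨constLoopN W B y, fun i hi => absurd hi (Nat.not_lt_zero _), ?_, ?_⟩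
    · refine ⟨id, shrinking_id _ _, ?_⟩
      intro i _
      exact hx
    · exact subdiv_refl _
  · -- Lg is a digraph map
    intro a b hab
    obtain ⟨φ, ψ, ha, hb, hlen, hdir, hpt⟩ := hab
    subst ha; subst hb
    left
    refine ⟨compLoop g hg hy φ, compLoop g hg hy ψ, rfl, rfl, hlen, hdir, ?_⟩
    intro i hi
    rcases hpt i hi with h | h
    · rcases hg _ _ h with h' | h'
      · exact Or.inl h'
      · exact Or.inr h'
    · exact Or.inr (congrArg g h)
  · -- composition
    funext a
    induction a using Quot.ind with
    | _ γ => rfl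
  · -- identity
    intro Lid hLid
    funext a
    induction a using Quot.ind with
    | _ γ => rw [hLid γ]; rfl
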